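/- Every unbalanced signed graph of order 5 containing no negative cycle of length 3 and no negative cycle of length 4 is switching isomorphic to Γ_5, the 5-cycle C5 with exactly one negative edge; moreover ρ(Γ_5) = −λ5(Γ_5) = 2 and λ1(Γ_5) = (1+√5)/2. -/

import Mathlib

structure SignedGraph (V : Type*) where
  G : SimpleGraph V
  sign : V → V → ℤ
  sign_symm : ∀ u v, sign u v = sign v u
  sign_mem : ∀ u v, G.Adj u v → sign u v = 1 ∨ sign u v = -1
  sign_not : ∀ u v, ¬ G.Adj u v → sign u v = 0

namespace SignedGraph

variable {V : Type*}

/-- The adjacency matrix of a signed graph, over `ℝ`. -/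
noncomputable def adjMatrix (Γ : SignedGraph V) : Matrix V V ℝ :=
  fun u v => (Γ.sign u v : ℝ)

/-- The largest eigenvalue `λ₁` of a signed graph. -/
noncomputable def lambda1 (Γ : SignedGraph V) [Fintype V] : ℝ :=
  letI := Classical.decEq V
  sSup (spectrum ℝ Γ.adjMatrix)

/-- The smallest eigenvalue `λₙ` of a signed graph. -/
noncomputable def lambdaMin (Γ : SignedGraph V) [Fintype V] : ℝ :=
  letI := Classical.decEq V
  sInf (spectrum ℝ Γ.adjMatrix)

/-- The spectral radius `ρ = max {λ₁, -λₙ}` of a signed graph. -/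
noncomputable def rho (Γ : SignedGraph V) [Fintype V] : ℝ :=
  max Γ.lambda1 (-Γ.lambdaMin)

/-- The sign (product of edge signs) of a walk. -/
def walkSign (Γ : SignedGraph V) {G' : SimpleGraph V} : ∀ {u v : V}, G'.Walk u v → ℤ
  | _, _, .nil => 1
  | _, _, .cons (u := a) (v := b) _ p => Γ.sign a b * walkSign Γ p

/-- A signed graph is balanced if every cycle is positive. -/
def Balanced (Γ : SignedGraph V) : Prop :=
  ∀ (u : V) (w : Γ.G.Walk u u), w.IsCycle → Γ.walkSign w = 1

def Unbalanced (Γ : SignedGraph V) : Prop := ¬ Γ.Balanced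

/-- `Γ` has a negative cycle of length `k`. -/
def HasNegCycleOfLength (Γ : SignedGraph V) (k : ℕ) : Prop :=
  ∃ (u : V) (w : Γ.G.Walk u u), w.IsCycle ∧ Γ.walkSign w = -1 ∧ w.length = k

/-- Switching equivalence: same underlying graph and signs related by a switching function. -/
def SwitchingEquivalent (Γ Γ' : SignedGraph V) : Prop :=
  Γ.G = Γ'.G ∧ ∃ s : V → ℤ, (∀ v, s v = 1 ∨ s v = -1) ∧
    ∀ u v, Γ'.sign u v = s u * Γ.sign u v * s v

/-- Switching isomorphism. -/
def SwitchingIsomorphic {V' : Type*} (Γ : SignedGraph V) (Γ' : SignedGraph V') : Prop :=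
  ∃ (e : V ≃ V') (s : V → ℤ), (∀ v, s v = 1 ∨ s v = -1) ∧
    (∀ u v, Γ'.G.Adj (e u) (e v) ↔ Γ.G.Adj u v) ∧
    (∀ u v, Γ'.sign (e u) (e v) = s u * Γ.sign u v * s v)

/-- Build a signed graph from a symmetric sign function with values in `{0, 1, -1}`. -/
def ofSign (s : V → V → ℤ) (hsymm : ∀ u v, s u v = s v u)
    (hloop : ∀ v, s v v = 0)
    (hval : ∀ u v, s u v = 0 ∨ s u v = 1 ∨ s u v = -1) : SignedGraph V where
  G := { Adj := fun u v => s u v ≠ 0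
         symm := ⟨fun u v h => by
           show s v u ≠ 0
           rw [hsymm v u]; exact h⟩
         loopless := ⟨fun v h => h (hloop v)⟩ }
  sign := s
  sign_symm := hsymm
  sign_mem := fun u v h => (hval u v).resolve_left h
  sign_not := fun u v h => not_not.mp h

/-- Build a signed graph on `Fin n` from a sign function on ordered pairs of naturals. -/
def ofMinMaxAux (n : ℕ) (aux : ℕ → ℕ → ℤ) (h0 : ∀ a, aux a a = 0)
    (hval : ∀ a b, aux a b = 0 ∨ aux a b = 1 ∨ aux a b = -1) : SignedGraph (Fin n) :=
  ofSign (fun i j => aux (min i.val j.val) (max i.val j.val))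
    (fun i j => by
      show aux (min i.val j.val) (max i.val j.val) = aux (min j.val i.val) (max j.val i.val)
      rw [min_comm, max_comm])
    (fun i => by
      show aux (min i.val i.val) (max i.val i.val) = 0
      rw [min_self, max_self, h0])
    (fun i j => hval _ _)

def gammaNAux : ℕ → ℕ → ℤ := fun a b =>
  if a = b then 0
  else if a = 0 ∧ b = 1 then -1
  else if a = 0 ∧ b = 2 then 1
  else if a = 1 ∧ b = 3 then 1
  else if 2 ≤ a ∧ a < b ∧ ¬(a = 2 ∧ b = 3) then 1
  else 0

/-- The signed graph `Γₙ`: a copy of `K_{n-2}` (on `{2, …, n-1}`) with the edge `{2,3}`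
removed, together with two new vertices `0, 1` and edges `{0,1}` (negative),
`{0,2}` and `{1,3}` (positive); all other edges positive. -/
def GammaN (n : ℕ) : SignedGraph (Fin n) :=
  ofMinMaxAux n gammaNAux (fun a => by simp [gammaNAux])
    (fun a b => by unfold gammaNAux; split_ifs <;> simp)

def gammaNTauAux (τ : ℕ) : ℕ → ℕ → ℤ := fun a b =>
  if a = b then 0
  else if a = 0 ∧ b = 1 then -1
  else if a = 0 ∧ b = 3 then 1
  else if a = 0 ∧ 4 ≤ b ∧ b ≤ τ + 3 then 1
  else if a = 1 ∧ b = 2 then 1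
  else if a = 2 ∧ τ + 4 ≤ b then 1
  else if a = 3 ∧ 4 ≤ b then 1
  else if 4 ≤ a ∧ a < b then 1
  else 0

/-- The signed graph `Γ_{n,τ}`: here `v₁ = 0`, `v₂ = 1`, `v₃ = 2`, `v₅ = 3`,
`X = {4, …, τ+3}`, `Y = {τ+4, …, n-1}` (with `v₄ = τ+4 ∈ Y`); the edge `{0,1}` is the
unique negative edge. -/
def GammaNTau (n τ : ℕ) : SignedGraph (Fin n) :=
  ofMinMaxAux n (gammaNTauAux τ) (fun a => by simp [gammaNTauAux])
    (fun a b => by unfold gammaNTauAux; split_ifs <;> simp)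

/-- The negation `-Γ` of a signed graph. -/
def neg (Γ : SignedGraph V) : SignedGraph V where
  G := Γ.G
  sign := fun u v => - Γ.sign u v
  sign_symm := fun u v => by
    show -Γ.sign u v = -Γ.sign v u
    rw [Γ.sign_symm]
  sign_mem := fun u v h => by
    show -Γ.sign u v = 1 ∨ -Γ.sign u v = -1
    rcases Γ.sign_mem u v h with h' | h' <;> simp [h']
  sign_not := fun u v h => by
    show -Γ.sign u v = 0
    simp [Γ.sign_not u v h]

/-- The induced signed subgraph on a set of vertices. -/
def induce (Γ : SignedGraph V) (S : Set V) : SignedGraph S where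
  G := { Adj := fun u v => Γ.G.Adj u v
         symm := ⟨fun u v h => SimpleGraph.Adj.symm h⟩
         loopless := ⟨fun u h => SimpleGraph.Adj.ne h rfl⟩ }
  sign := fun u v => Γ.sign u v
  sign_symm := fun u v => Γ.sign_symm u v
  sign_mem := fun u v h => Γ.sign_mem u v h
  sign_not := fun u v h => Γ.sign_not u v h

/-- `S` is a balanced clique of `Γ`: it induces a complete subgraph which is balanced. -/
def IsBalancedClique [DecidableEq V] (Γ : SignedGraph V) (S : Finset V) : Prop :=
  (∀ u ∈ S, ∀ v ∈ S, u ≠ v → Γ.G.Adj u v) ∧ (Γ.induce (S : Set V)).Balanced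

end SignedGraph

namespace SignedGraph

def c5Aux : ℕ → ℕ → ℤ := fun a b =>
  if a = 0 ∧ b = 1 then -1
  else if (a = 1 ∧ b = 2) ∨ (a = 2 ∧ b = 3) ∨ (a = 3 ∧ b = 4) ∨ (a = 0 ∧ b = 4) then 1
  else 0

/-- `Γ₅`: the 5-cycle `C₅` (on vertices `0,1,2,3,4` in cyclic order) with exactly one negative
edge, namely `{0,1}`. -/
def Gamma5 : SignedGraph (Fin 5) :=
  ofMinMaxAux 5 c5Aux
    (fun a => by unfold c5Aux; split_ifs <;> omega)
    (fun a b => by unfold c5Aux; split_ifs <;> simp)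

end SignedGraph

namespace SignedGraph
variable {V : Type*}

@[simp] lemma walkSign_nil (Γ : SignedGraph V) {G' : SimpleGraph V} {u : V} :
    Γ.walkSign (SimpleGraph.Walk.nil : G'.Walk u u) = 1 := rfl

@[simp] lemma walkSign_cons (Γ : SignedGraph V) {G' : SimpleGraph V} {u v w : V}
    (h : G'.Adj u v) (p : G'.Walk v w) :
    Γ.walkSign (SimpleGraph.Walk.cons h p) = Γ.sign u v * Γ.walkSign p := rfl

lemma walkSign_mem (Γ : SignedGraph V) : ∀ {u v : V} (w : Γ.G.Walk u v),
    Γ.walkSign w = 1 ∨ Γ.walkSign w = -1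
  | _, _, .nil => Or.inl rfl
  | _, _, .cons h p => by
    rcases Γ.sign_mem _ _ h with h1 | h1 <;> rcases walkSign_mem Γ p with h2 | h2 <;>
      simp [h1, h2]

lemma walk_len5 {G : SimpleGraph V} : ∀ {u v : V} (w : G.Walk u v), w.length = 5 →
    ∃ (a b c d : V) (h1 : G.Adj u a) (h2 : G.Adj a b) (h3 : G.Adj b c) (h4 : G.Adj c d)
      (h5 : G.Adj d v),
      w = .cons h1 (.cons h2 (.cons h3 (.cons h4 (.cons h5 .nil)))) := by
  intro u v w hw
  cases w with
  | nil => simp at hw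
  | cons h1 p =>
    cases p with
    | nil => simp at hw
    | cons h2 p =>
      cases p with
      | nil => simp at hw
      | cons h3 p =>
        cases p with
        | nil => simp at hw
        | cons h4 p =>
          cases p with
          | nil => simp at hw
          | cons h5 p =>
            cases p with
            | nil => exact ⟨_, _, _, _, h1, h2, h3, h4, h5, rfl⟩
            | cons h6 p => simp at hw

lemma triangle_isCycle {G : SimpleGraph V} {a b c : V} (hab : G.Adj a b) (hbc : G.Adj b c)
    (hca : G.Adj c a) :
    (SimpleGraph.Walk.cons hab (SimpleGraph.Walk.cons hbc
      (SimpleGraph.Walk.cons hca SimpleGraph.Walk.nil))).IsCycle := by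
  have h1 := hab.ne
  have h2 := hbc.ne
  have h3 := hca.ne
  rw [SimpleGraph.Walk.isCycle_def, SimpleGraph.Walk.isTrail_def]
  refine ⟨?_, by simp, ?_⟩ <;> simp_all [Sym2.eq, Sym2.rel_iff', and_comm] <;> tauto

lemma quad_isCycle {G : SimpleGraph V} {a b c d : V} (hab : G.Adj a b) (hbc : G.Adj b c)
    (hcd : G.Adj c d) (hda : G.Adj d a) (hac : a ≠ c) (hbd : b ≠ d) :
    (SimpleGraph.Walk.cons hab (SimpleGraph.Walk.cons hbc
      (SimpleGraph.Walk.cons hcd (SimpleGraph.Walk.cons hda SimpleGraph.Walk.nil)))).IsCycle := by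
  have h1 := hab.ne
  have h2 := hbc.ne
  have h3 := hcd.ne
  have h4 := hda.ne
  rw [SimpleGraph.Walk.isCycle_def, SimpleGraph.Walk.isTrail_def]
  refine ⟨?_, by simp, ?_⟩ <;> simp_all [Sym2.eq, Sym2.rel_iff', and_comm] <;> tauto


lemma no_chord (Γ : SignedGraph V)
    (h3 : ¬ Γ.HasNegCycleOfLength 3) (h4 : ¬ Γ.HasNegCycleOfLength 4)
    (x0 x1 x2 x3 x4 : V)
    (d02 : x0 ≠ x2) (d03 : x0 ≠ x3) (d04 : x0 ≠ x4) (d24 : x2 ≠ x4)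
    (a01 : Γ.G.Adj x0 x1) (a12 : Γ.G.Adj x1 x2) (a23 : Γ.G.Adj x2 x3)
    (a34 : Γ.G.Adj x3 x4) (a40 : Γ.G.Adj x4 x0)
    (hp : Γ.sign x0 x1 * Γ.sign x1 x2 * Γ.sign x2 x3 * Γ.sign x3 x4 * Γ.sign x4 x0 = -1)
    (hch : Γ.G.Adj x0 x2) : False := by
  set w3 : Γ.G.Walk x0 x0 :=
    .cons a01 (.cons a12 (.cons hch.symm .nil)) with hw3
  set w4 : Γ.G.Walk x0 x0 :=
    .cons hch (.cons a23 (.cons a34 (.cons a40 .nil))) with hw4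
  have cyc3 : w3.IsCycle := triangle_isCycle a01 a12 hch.symm
  have cyc4 : w4.IsCycle := quad_isCycle hch a23 a34 a40 d03 d24
  have hs3 : Γ.walkSign w3 = Γ.sign x0 x1 * (Γ.sign x1 x2 * (Γ.sign x2 x0 * 1)) := rfl
  have hs4 : Γ.walkSign w4 =
      Γ.sign x0 x2 * (Γ.sign x2 x3 * (Γ.sign x3 x4 * (Γ.sign x4 x0 * 1))) := rfl
  have hsymm : Γ.sign x2 x0 = Γ.sign x0 x2 := Γ.sign_symm x2 x0
  have hneg : Γ.walkSign w3 = -1 ∨ Γ.walkSign w4 = -1 := by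
    rw [hs3, hs4, hsymm]
    rcases Γ.sign_mem _ _ a01 with h1 | h1 <;>
    rcases Γ.sign_mem _ _ a12 with h2 | h2 <;>
    rcases Γ.sign_mem _ _ a23 with h5 | h5 <;>
    rcases Γ.sign_mem _ _ a34 with h6 | h6 <;>
    rcases Γ.sign_mem _ _ a40 with h7 | h7 <;>
    rcases Γ.sign_mem _ _ hch with h8 | h8 <;>
      simp only [h1, h2, h5, h6, h7, h8] at hp ⊢ <;> norm_num at hp <;> norm_num
  rcases hneg with hn | hn
  · exact h3 ⟨x0, w3, cyc3, hn, rfl⟩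
  · exact h4 ⟨x0, w4, cyc4, hn, rfl⟩


lemma det5 (a : ℝ) :
    (Matrix.det !![a,1,0,0,-1; 1,a,-1,0,0; 0,-1,a,-1,0; 0,0,-1,a,-1; -1,0,0,-1,a])
      = (a+2)*(a^2-a-1)^2 := by
  simp [Matrix.det_succ_row_zero, Fin.sum_univ_succ]
  simp [Fin.succAbove, Fin.lt_def]
  ring

lemma sign_gamma5 : ∀ i j : Fin 5,
    Gamma5.sign i j = !![(0:ℤ),-1,0,0,1; -1,0,1,0,0; 0,1,0,1,0; 0,0,1,0,1; 1,0,0,1,0] i j := by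
  intro i j; fin_cases i <;> fin_cases j <;> rfl

lemma adjMatrix_gamma5 :
    Gamma5.adjMatrix = !![0,-1,0,0,1; -1,0,1,0,0; 0,1,0,1,0; 0,0,1,0,1; 1,0,0,1,0] := by
  ext i j
  show ((Gamma5.sign i j : ℤ) : ℝ) = _
  rw [sign_gamma5 i j]
  fin_cases i <;> fin_cases j <;> norm_num [Fin.ext_iff]

lemma charmat_gamma5 (x : ℝ) :
    (algebraMap ℝ (Matrix (Fin 5) (Fin 5) ℝ)) x - Gamma5.adjMatrix
      = !![x,1,0,0,-1; 1,x,-1,0,0; 0,-1,x,-1,0; 0,0,-1,x,-1; -1,0,0,-1,x] := by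
  rw [adjMatrix_gamma5]
  ext i j
  rw [Matrix.sub_apply, Matrix.algebraMap_matrix_apply]
  fin_cases i <;> fin_cases j <;> norm_num [Fin.ext_iff]

lemma spectrum_gamma5 :
    spectrum ℝ (Gamma5.adjMatrix)
      = {-2, (1 - Real.sqrt 5)/2, (1 + Real.sqrt 5)/2} := by
  have h5 : Real.sqrt 5 ^ 2 = 5 := Real.sq_sqrt (by norm_num)
  ext x
  rw [spectrum.mem_iff, Matrix.isUnit_iff_isUnit_det, isUnit_iff_ne_zero, not_ne_iff,
    charmat_gamma5]
  rw [det5 x]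
  simp only [Set.mem_insert_iff, Set.mem_singleton_iff]
  constructor
  · intro h
    rcases mul_eq_zero.mp h with h | h
    · left; linarith
    · have h2 : x ^ 2 - x - 1 = 0 := by
        have := pow_eq_zero_iff (n := 2) (by norm_num) |>.mp h
        linarith
      have hsplit : (2*x - 1 - Real.sqrt 5) * (2*x - 1 + Real.sqrt 5) = 0 := by
        linear_combination 4 * h2 - h5
      rcases mul_eq_zero.mp hsplit with h' | h'
      · right; right; linarith
      · right; left; linarith
  · rintro (rfl | rfl | rfl)
    · norm_num
    · have hq : ((1 - Real.sqrt 5)/2)^2 - (1 - Real.sqrt 5)/2 - 1 = 0 := by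
        linear_combination h5 / 4
      rw [hq]; ring
    · have hq : ((1 + Real.sqrt 5)/2)^2 - (1 + Real.sqrt 5)/2 - 1 = 0 := by
        linear_combination h5 / 4
      rw [hq]; ring

lemma sqrt5_bounds : 2 < Real.sqrt 5 ∧ Real.sqrt 5 < 3 := by
  have h5 : Real.sqrt 5 ^ 2 = 5 := Real.sq_sqrt (by norm_num)
  have h0 := Real.sqrt_nonneg 5
  constructor <;> nlinarith

lemma lambda1_gamma5 : Gamma5.lambda1 = (1 + Real.sqrt 5) / 2 := by
  obtain ⟨hl, hu⟩ := sqrt5_bounds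
  unfold lambda1
  rw [Subsingleton.elim (Classical.decEq (Fin 5)) (instDecidableEqFin 5), spectrum_gamma5]
  rw [show ({-2, (1 - Real.sqrt 5)/2, (1 + Real.sqrt 5)/2} : Set ℝ)
      = insert (-2) {(1 - Real.sqrt 5)/2, (1 + Real.sqrt 5)/2} from rfl]
  rw [csSup_insert (Set.Finite.bddAbove ((Set.finite_singleton _).insert _))
    (by simp), csSup_pair]
  have h1 : (1 - Real.sqrt 5)/2 ⊔ (1 + Real.sqrt 5)/2 = (1 + Real.sqrt 5)/2 :=
    max_eq_right (by linarith)
  rw [h1]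
  exact max_eq_right (by linarith)

lemma lambdaMin_gamma5 : Gamma5.lambdaMin = -2 := by
  obtain ⟨hl, hu⟩ := sqrt5_bounds
  unfold lambdaMin
  rw [Subsingleton.elim (Classical.decEq (Fin 5)) (instDecidableEqFin 5), spectrum_gamma5]
  rw [show ({-2, (1 - Real.sqrt 5)/2, (1 + Real.sqrt 5)/2} : Set ℝ)
      = insert (-2) {(1 - Real.sqrt 5)/2, (1 + Real.sqrt 5)/2} from rfl]
  rw [csInf_insert (Set.Finite.bddBelow ((Set.finite_singleton _).insert _))
    (by simp), csInf_pair]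
  have h1 : (1 - Real.sqrt 5)/2 ⊓ (1 + Real.sqrt 5)/2 = (1 - Real.sqrt 5)/2 :=
    min_eq_left (by linarith)
  rw [h1]
  exact min_eq_left (by linarith)

lemma rho_gamma5 : Gamma5.rho = 2 := by
  obtain ⟨hl, hu⟩ := sqrt5_bounds
  rw [rho, lambda1_gamma5, lambdaMin_gamma5]
  rw [max_eq_right (by linarith)]
  norm_num


end SignedGraph

namespace SignedGraph

lemma gamma5_adj (i j : Fin 5) :
    Gamma5.G.Adj i j ↔ c5Aux (min i.1 j.1) (max i.1 j.1) ≠ 0 := Iff.rfl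

instance : DecidableRel Gamma5.G.Adj := fun i j => decidable_of_iff _ (gamma5_adj i j).symm

end SignedGraph

set_option maxHeartbeats 2000000 in

open SignedGraph in
/-- Every unbalanced signed graph of order 5 with no negative 3-cycle and no
negative 4-cycle is switching isomorphic to `Γ₅`, the 5-cycle with exactly one negative
edge; moreover `ρ(Γ₅) = −λ₅(Γ₅) = 2` and `λ₁(Γ₅) = (1 + √5)/2`. -/
theorem order_five_C34free_unbalanced {V : Type*} [Fintype V] (hcard : Fintype.card V = 5)
    (Γ : SignedGraph V) (hunb : Γ.Unbalanced)
    (h3 : ¬ Γ.HasNegCycleOfLength 3) (h4 : ¬ Γ.HasNegCycleOfLength 4) :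
    Γ.SwitchingIsomorphic Gamma5 ∧
    Gamma5.rho = 2 ∧ Gamma5.lambdaMin = -2 ∧
    Gamma5.lambda1 = (1 + Real.sqrt 5) / 2 := by
  refine ⟨?_, rho_gamma5, lambdaMin_gamma5, lambda1_gamma5⟩
  unfold Unbalanced SignedGraph.Balanced at hunb
  push_neg at hunb
  obtain ⟨x0, w, hc, hs1⟩ := hunb
  have hsneg : Γ.walkSign w = -1 := (Γ.walkSign_mem w).resolve_left hs1
  have hnodup := ((SimpleGraph.Walk.isCycle_def w).mp hc).2.2
  have hlen : w.length = 5 := by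
    have h3l := hc.three_le_length
    have hsl : w.support.length = w.length + 1 := SimpleGraph.Walk.length_support w
    have hcl : w.support.tail.length ≤ 5 := by
      rw [← hcard]; exact List.Nodup.length_le_card hnodup
    have htl : w.support.tail.length = w.support.length - 1 := List.length_tail
    have hne3 : w.length ≠ 3 := fun h => h3 ⟨x0, w, hc, hsneg, h⟩
    have hne4 : w.length ≠ 4 := fun h => h4 ⟨x0, w, hc, hsneg, h⟩
    omega
  obtain ⟨x1, x2, x3, x4, a01, a12, a23, a34, a40, hw⟩ := walk_len5 w hlen
  rw [hw] at hnodup hsneg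
  simp only [SimpleGraph.Walk.support_cons, SimpleGraph.Walk.support_nil,
    List.tail_cons, List.nodup_cons, List.mem_cons, List.mem_singleton,
    List.not_mem_nil, List.nodup_nil, not_or] at hnodup
  obtain ⟨⟨d12, d13, d14, d10, -⟩, ⟨d23, d24, d20, -⟩, ⟨d34, d30, -⟩, ⟨d40, -⟩, -⟩ := hnodup
  have d21 : x2 ≠ x1 := fun h => d12 h.symm
  have d31 : x3 ≠ x1 := fun h => d13 h.symm
  have d41 : x4 ≠ x1 := fun h => d14 h.symm
  have d01 : x0 ≠ x1 := fun h => d10 h.symm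
  have d32 : x3 ≠ x2 := fun h => d23 h.symm
  have d42 : x4 ≠ x2 := fun h => d24 h.symm
  have d02 : x0 ≠ x2 := fun h => d20 h.symm
  have d43 : x4 ≠ x3 := fun h => d34 h.symm
  have d03 : x0 ≠ x3 := fun h => d30 h.symm
  have d04 : x0 ≠ x4 := fun h => d40 h.symm
  simp only [walkSign_cons, walkSign_nil, mul_one] at hsneg
  have hp : Γ.sign x0 x1 * Γ.sign x1 x2 * Γ.sign x2 x3 * Γ.sign x3 x4 * Γ.sign x4 x0 = -1 := by
    linear_combination hsneg
  have hn02 : ¬ Γ.G.Adj x0 x2 := fun hch =>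
    no_chord Γ h3 h4 x0 x1 x2 x3 x4 d02 d03 d04 d24 a01 a12 a23 a34 a40 hp hch
  have hn13 : ¬ Γ.G.Adj x1 x3 := fun hch =>
    no_chord Γ h3 h4 x1 x2 x3 x4 x0 d13 d14 d10 d30 a12 a23 a34 a40 a01
      (by linear_combination hp) hch
  have hn24 : ¬ Γ.G.Adj x2 x4 := fun hch =>
    no_chord Γ h3 h4 x2 x3 x4 x0 x1 d24 d20 d21 d41 a23 a34 a40 a01 a12
      (by linear_combination hp) hch
  have hn30 : ¬ Γ.G.Adj x3 x0 := fun hch =>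
    no_chord Γ h3 h4 x3 x4 x0 x1 x2 d30 d31 d32 d02 a34 a40 a01 a12 a23
      (by linear_combination hp) hch
  have hn41 : ¬ Γ.G.Adj x4 x1 := fun hch =>
    no_chord Γ h3 h4 x4 x0 x1 x2 x3 d41 d42 d43 d13 a40 a01 a12 a23 a34
      (by linear_combination hp) hch
  -- the bijection
  have hinj : Function.Injective (![x4, x0, x1, x2, x3] : Fin 5 → V) := by
    intro i j hij
    fin_cases i <;> fin_cases j <;>
      simp only [Matrix.cons_val_zero, Matrix.cons_val_one, Matrix.head_cons,
        Matrix.cons_val_two, Matrix.tail_cons, Matrix.cons_val_three,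
        Matrix.cons_val_four, Matrix.cons_val_succ] at hij <;>
      first
        | rfl
        | exact absurd hij (by assumption)
        | exact absurd hij.symm (by assumption)
  have hbij : Function.Bijective (![x4, x0, x1, x2, x3] : Fin 5 → V) :=
    (Fintype.bijective_iff_injective_and_card _).mpr ⟨hinj, by simp [hcard]⟩
  set E := Equiv.ofBijective _ hbij with hE
  set e : V ≃ Fin 5 := E.symm with he
  have hfe : ∀ u : V, (![x4, x0, x1, x2, x3] : Fin 5 → V) (e u) = u := fun u =>
    E.apply_symm_apply u
  have hef : ∀ i : Fin 5, e ((![x4, x0, x1, x2, x3] : Fin 5 → V) i) = i := fun i =>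
    E.symm_apply_apply i
  -- signs are units
  have hm01 := Γ.sign_mem x0 x1 a01
  have hm12 := Γ.sign_mem x1 x2 a12
  have hm23 := Γ.sign_mem x2 x3 a23
  have hm34 := Γ.sign_mem x3 x4 a34
  have hm40 := Γ.sign_mem x4 x0 a40
  -- switching function values
  set g : Fin 5 → ℤ :=
    ![Γ.sign x0 x1 * Γ.sign x1 x2 * Γ.sign x2 x3 * Γ.sign x3 x4, 1, Γ.sign x0 x1,
      Γ.sign x0 x1 * Γ.sign x1 x2, Γ.sign x0 x1 * Γ.sign x1 x2 * Γ.sign x2 x3] with hg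
  have hgpm : ∀ i : Fin 5, g i = 1 ∨ g i = -1 := by
    intro i
    fin_cases i <;>
      rcases hm01 with h01 | h01 <;> rcases hm12 with h12 | h12 <;>
      rcases hm23 with h23 | h23 <;> rcases hm34 with h34 | h34 <;>
      simp [hg, h01, h12, h23, h34]
  refine ⟨e, fun v => g (e v), fun v => hgpm (e v), ?_, ?_⟩
  · -- adjacency
    intro u v
    obtain ⟨i, rfl⟩ : ∃ i, u = (![x4, x0, x1, x2, x3] : Fin 5 → V) i := ⟨e u, (hfe u).symm⟩
    obtain ⟨j, rfl⟩ : ∃ j, v = (![x4, x0, x1, x2, x3] : Fin 5 → V) j := ⟨e v, (hfe v).symm⟩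
    rw [hef i, hef j]
    fin_cases i <;> fin_cases j <;>
      first
        | exact iff_of_false (by decide) Γ.G.irrefl
        | exact iff_of_true (by decide) a40
        | exact iff_of_true (by decide) a40.symm
        | exact iff_of_true (by decide) a01
        | exact iff_of_true (by decide) a01.symm
        | exact iff_of_true (by decide) a12
        | exact iff_of_true (by decide) a12.symm
        | exact iff_of_true (by decide) a23
        | exact iff_of_true (by decide) a23.symm
        | exact iff_of_true (by decide) a34
        | exact iff_of_true (by decide) a34.symm
        | exact iff_of_false (by decide) hn02
        | exact iff_of_false (by decide) (fun h => hn02 h.symm)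
        | exact iff_of_false (by decide) hn13
        | exact iff_of_false (by decide) (fun h => hn13 h.symm)
        | exact iff_of_false (by decide) hn24
        | exact iff_of_false (by decide) (fun h => hn24 h.symm)
        | exact iff_of_false (by decide) hn30
        | exact iff_of_false (by decide) (fun h => hn30 h.symm)
        | exact iff_of_false (by decide) hn41
        | exact iff_of_false (by decide) (fun h => hn41 h.symm)
  · -- signs
    intro u v
    obtain ⟨i, rfl⟩ : ∃ i, u = (![x4, x0, x1, x2, x3] : Fin 5 → V) i := ⟨e u, (hfe u).symm⟩
    obtain ⟨j, rfl⟩ : ∃ j, v = (![x4, x0, x1, x2, x3] : Fin 5 → V) j := ⟨e v, (hfe v).symm⟩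
    beta_reduce
    rw [hef i, hef j]
    have knon : ∀ (i j : Fin 5) (p q : V), Gamma5.sign i j = 0 → ¬Γ.G.Adj p q →
        Gamma5.sign i j = g i * Γ.sign p q * g j := by
      intro i j p q h0 hn
      rw [h0, Γ.sign_not p q hn]; ring
    have k01 : Gamma5.sign 0 1 = g 0 * Γ.sign x4 x0 * g 1 := by
      rw [show Gamma5.sign 0 1 = -1 from by decide, hg]
      simp only [Matrix.cons_val_zero, Matrix.cons_val_one, Matrix.head_cons, Matrix.cons_val_two, Matrix.tail_cons, Matrix.cons_val_three, Matrix.cons_val_four]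
      linear_combination -hp
    have k10 : Gamma5.sign 1 0 = g 1 * Γ.sign x0 x4 * g 0 := by
      rw [show Gamma5.sign 1 0 = -1 from by decide, hg, Γ.sign_symm x0 x4]
      simp only [Matrix.cons_val_zero, Matrix.cons_val_one, Matrix.head_cons, Matrix.cons_val_two, Matrix.tail_cons, Matrix.cons_val_three, Matrix.cons_val_four]
      linear_combination -hp
    have k12 : Gamma5.sign 1 2 = g 1 * Γ.sign x0 x1 * g 2 := by
      rw [show Gamma5.sign 1 2 = 1 from by decide, hg]
      simp only [Matrix.cons_val_zero, Matrix.cons_val_one, Matrix.head_cons, Matrix.cons_val_two, Matrix.tail_cons, Matrix.cons_val_three, Matrix.cons_val_four]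
      rcases hm01 with h | h <;> rw [h] <;> norm_num
    have k21 : Gamma5.sign 2 1 = g 2 * Γ.sign x1 x0 * g 1 := by
      rw [show Gamma5.sign 2 1 = 1 from by decide, hg, Γ.sign_symm x1 x0]
      simp only [Matrix.cons_val_zero, Matrix.cons_val_one, Matrix.head_cons, Matrix.cons_val_two, Matrix.tail_cons, Matrix.cons_val_three, Matrix.cons_val_four]
      rcases hm01 with h | h <;> rw [h] <;> norm_num
    have k23 : Gamma5.sign 2 3 = g 2 * Γ.sign x1 x2 * g 3 := by
      rw [show Gamma5.sign 2 3 = 1 from by decide, hg]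
      simp only [Matrix.cons_val_zero, Matrix.cons_val_one, Matrix.head_cons, Matrix.cons_val_two, Matrix.tail_cons, Matrix.cons_val_three, Matrix.cons_val_four]
      rcases hm01 with h | h <;> rcases hm12 with h' | h' <;> rw [h, h'] <;> norm_num
    have k32 : Gamma5.sign 3 2 = g 3 * Γ.sign x2 x1 * g 2 := by
      rw [show Gamma5.sign 3 2 = 1 from by decide, hg, Γ.sign_symm x2 x1]
      simp only [Matrix.cons_val_zero, Matrix.cons_val_one, Matrix.head_cons, Matrix.cons_val_two, Matrix.tail_cons, Matrix.cons_val_three, Matrix.cons_val_four]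
      rcases hm01 with h | h <;> rcases hm12 with h' | h' <;> rw [h, h'] <;> norm_num
    have k34 : Gamma5.sign 3 4 = g 3 * Γ.sign x2 x3 * g 4 := by
      rw [show Gamma5.sign 3 4 = 1 from by decide, hg]
      simp only [Matrix.cons_val_zero, Matrix.cons_val_one, Matrix.head_cons, Matrix.cons_val_two, Matrix.tail_cons, Matrix.cons_val_three, Matrix.cons_val_four]
      rcases hm01 with h | h <;> rcases hm12 with h' | h' <;> rcases hm23 with h'' | h'' <;>
        rw [h, h', h''] <;> norm_num
    have k43 : Gamma5.sign 4 3 = g 4 * Γ.sign x3 x2 * g 3 := by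
      rw [show Gamma5.sign 4 3 = 1 from by decide, hg, Γ.sign_symm x3 x2]
      simp only [Matrix.cons_val_zero, Matrix.cons_val_one, Matrix.head_cons, Matrix.cons_val_two, Matrix.tail_cons, Matrix.cons_val_three, Matrix.cons_val_four]
      rcases hm01 with h | h <;> rcases hm12 with h' | h' <;> rcases hm23 with h'' | h'' <;>
        rw [h, h', h''] <;> norm_num
    have k04 : Gamma5.sign 0 4 = g 0 * Γ.sign x4 x3 * g 4 := by
      rw [show Gamma5.sign 0 4 = 1 from by decide, hg, Γ.sign_symm x4 x3]
      simp only [Matrix.cons_val_zero, Matrix.cons_val_one, Matrix.head_cons, Matrix.cons_val_two, Matrix.tail_cons, Matrix.cons_val_three, Matrix.cons_val_four]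
      rcases hm01 with h | h <;> rcases hm12 with h' | h' <;> rcases hm23 with h'' | h'' <;>
        rcases hm34 with h''' | h''' <;> rw [h, h', h'', h'''] <;> norm_num
    have k40 : Gamma5.sign 4 0 = g 4 * Γ.sign x3 x4 * g 0 := by
      rw [show Gamma5.sign 4 0 = 1 from by decide, hg]
      simp only [Matrix.cons_val_zero, Matrix.cons_val_one, Matrix.head_cons, Matrix.cons_val_two, Matrix.tail_cons, Matrix.cons_val_three, Matrix.cons_val_four]
      rcases hm01 with h | h <;> rcases hm12 with h' | h' <;> rcases hm23 with h'' | h'' <;>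
        rcases hm34 with h''' | h''' <;> rw [h, h', h'', h'''] <;> norm_num
    fin_cases i <;> fin_cases j <;>
      first
        | exact knon _ _ _ _ (by decide) Γ.G.irrefl
        | exact knon _ _ _ _ (by decide) hn02
        | exact knon _ _ _ _ (by decide) (fun h => hn02 h.symm)
        | exact knon _ _ _ _ (by decide) hn13
        | exact knon _ _ _ _ (by decide) (fun h => hn13 h.symm)
        | exact knon _ _ _ _ (by decide) hn24
        | exact knon _ _ _ _ (by decide) (fun h => hn24 h.symm)
        | exact knon _ _ _ _ (by decide) hn30
        | exact knon _ _ _ _ (by decide) (fun h => hn30 h.symm)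
        | exact knon _ _ _ _ (by decide) hn41
        | exact knon _ _ _ _ (by decide) (fun h => hn41 h.symm)
        | exact k01
        | exact k10
        | exact k12
        | exact k21
        | exact k23
        | exact k32
        | exact k34
        | exact k43
        | exact k04
        | exact k40
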